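/- Let V be a closed symmetric monoidal model category and C a model category enriched in V (an enriched ordinary category over V), equipped with: a bifunctor ⊗ : C × V → C; natural maps φ_{v,x,y} : C(x ⊗ v, y) → [v, C(x,y)]_V that are weak equivalences in V whenever v is cofibrant in V, x is cofibrant and y is fibrant in C; and a natural map ρ_x : x ⊗ 𝟙_V → x such that the composite φ_{𝟙_V,x,y} ∘ (ρ_x)* : C(x,y) → [𝟙_V, C(x,y)]_V equals the canonical isomorphism. Assume: (i) x ⊗ v is cofibrant in C whenever x is cofibrant in C and v is cofibrant in V; (ii) C(x,y) is fibrant in V whenever x is cofibrant and y is fibrant; (iii) for every fibrant object M of V and every cofibrant replacement q : Q𝟙_V → 𝟙_V, the map q* : [𝟙_V, M]_V → [Q𝟙_V, M]_V is a weak equivalence in V; (iv) C satisfies the detection property over V. Then the external unit axiom holds: for every cofibrant object x of C and every cofibrant replacement q : Q𝟙_V → 𝟙_V, the composite ρ_x ∘ (x ⊗ q) : x ⊗ Q𝟙_V → x is a weak equivalence in C. -/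

import Mathlib

/-!
STATEMENT 12: Let `V` be a closed symmetric monoidal model category and `C` a model
category enriched in `V` (an enriched ordinary category over `V`), equipped with a
bifunctor `⊗ : C × V → C` (encoded as `T : C ⥤ V ⥤ C`), natural maps
`φ_{v,x,y} : C(x ⊗ v, y) → [v, C(x,y)]_V` that are weak equivalences in `V` whenever `v`
is cofibrant in `V`, `x` is cofibrant and `y` is fibrant in `C`, and a natural map
`ρ_x : x ⊗ 𝟙_V → x` such that `φ_{𝟙_V,x,y} ∘ (ρ_x)*` equals the canonical isomorphism
`C(x,y) ≅ [𝟙_V, C(x,y)]`. Assume (i) tensors of cofibrant objects are cofibrant;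
(ii) hom-objects from cofibrant to fibrant objects are fibrant; (iii) for every fibrant
`M` in `V` and every cofibrant replacement `q : Q𝟙_V → 𝟙_V`, the map
`q* : [𝟙_V, M] → [Q𝟙_V, M]` is a weak equivalence; (iv) `C` satisfies the detection
property over `V`. Then the external unit axiom holds: for every cofibrant `x` in `C` and
every cofibrant replacement `q : Q𝟙_V → 𝟙_V`, the composite
`ρ_x ∘ (x ⊗ q) : x ⊗ Q𝟙_V → x` is a weak equivalence in `C`.
-/

open CategoryTheory Category Limits MonoidalCategory Functor

/-- `f` is a retract of `g` in the arrow category. -/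
def IsRetractOfMaps {C : Type*} [Category C] {X Y X' Y' : C}
    (f : X ⟶ Y) (g : X' ⟶ Y') : Prop :=
  ∃ (i : X ⟶ X') (r : X' ⟶ X) (i' : Y ⟶ Y') (r' : Y' ⟶ Y),
    i ≫ r = 𝟙 X ∧ i' ≫ r' = 𝟙 Y ∧ i ≫ g = f ≫ i' ∧ g ≫ r' = r ≫ f

/-- A model structure on a category: weak equivalences, fibrations and cofibrations,
satisfying the two-out-of-three, retract, lifting and factorization axioms. -/
structure ModelStruct (C : Type*) [Category C] where
  weq : MorphismProperty C
  fib : MorphismProperty C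
  cof : MorphismProperty C
  weq_id : ∀ X : C, weq (𝟙 X)
  weq_comp : ∀ {X Y Z : C} (f : X ⟶ Y) (g : Y ⟶ Z), weq f → weq g → weq (f ≫ g)
  weq_of_postcomp : ∀ {X Y Z : C} (f : X ⟶ Y) (g : Y ⟶ Z), weq g → weq (f ≫ g) → weq f
  weq_of_precomp : ∀ {X Y Z : C} (f : X ⟶ Y) (g : Y ⟶ Z), weq f → weq (f ≫ g) → weq g
  weq_retract : ∀ {X Y X' Y' : C} (f : X ⟶ Y) (g : X' ⟶ Y'),
    IsRetractOfMaps f g → weq g → weq f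
  fib_retract : ∀ {X Y X' Y' : C} (f : X ⟶ Y) (g : X' ⟶ Y'),
    IsRetractOfMaps f g → fib g → fib f
  cof_retract : ∀ {X Y X' Y' : C} (f : X ⟶ Y) (g : X' ⟶ Y'),
    IsRetractOfMaps f g → cof g → cof f
  lift : ∀ {A B X Y : C} (i : A ⟶ B) (p : X ⟶ Y), cof i → fib p →
    (weq i ∨ weq p) → HasLiftingProperty i p
  factor_cof_trivFib : ∀ {X Y : C} (f : X ⟶ Y), ∃ (Z : C) (g : X ⟶ Z) (h : Z ⟶ Y),
    cof g ∧ fib h ∧ weq h ∧ g ≫ h = f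
  factor_trivCof_fib : ∀ {X Y : C} (f : X ⟶ Y), ∃ (Z : C) (g : X ⟶ Z) (h : Z ⟶ Y),
    cof g ∧ weq g ∧ fib h ∧ g ≫ h = f

/-- An object is cofibrant if the map from the initial object is a cofibration. -/
def ModelStruct.Cofibrant {C : Type*} [Category C] [HasInitial C]
    (M : ModelStruct C) (x : C) : Prop :=
  M.cof (initial.to x)

/-- An object is fibrant if the map to the terminal object is a fibration. -/
def ModelStruct.Fibrant {C : Type*} [Category C] [HasTerminal C]
    (M : ModelStruct C) (x : C) : Prop :=
  M.fib (terminal.from x)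

/-- A Quillen adjunction: an adjunction whose left adjoint preserves cofibrations
and trivial cofibrations. -/
structure QuillenAdjunction {W V : Type*} [Category W] [Category V]
    (MW : ModelStruct W) (MV : ModelStruct V) (F : W ⥤ V) (G : V ⥤ W) where
  adj : F ⊣ G
  F_cof : ∀ {a b : W} (i : a ⟶ b), MW.cof i → MV.cof (F.map i)
  F_trivCof : ∀ {a b : W} (i : a ⟶ b), MW.cof i → MW.weq i → MV.weq (F.map i)

/-- The pushout-product of `i : a ⟶ b` and `k : x ⟶ y` in a monoidal category. -/
noncomputable def pushoutProduct {C : Type*} [Category C] [MonoidalCategory C]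
    [HasPushouts C] {a b x y : C} (i : a ⟶ b) (k : x ⟶ y) :
    pushout (a ◁ k) (i ▷ x) ⟶ b ⊗ y :=
  pushout.desc (i ▷ y) (b ◁ k) (whisker_exchange i k)

/-- A monoidal model structure: a model structure together with the
pushout-product axiom and the unit axiom. -/
structure MonoidalModelStruct (C : Type*) [Category C] [MonoidalCategory C]
    [HasPushouts C] [HasInitial C] extends ModelStruct C where
  pp_cof : ∀ {a b x y : C} (i : a ⟶ b) (k : x ⟶ y), cof i → cof k →
    cof (pushoutProduct i k)
  pp_weq : ∀ {a b x y : C} (i : a ⟶ b) (k : x ⟶ y), cof i → cof k →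
    (weq i ∨ weq k) → weq (pushoutProduct i k)
  unit_axiom : ∀ (x : C), toModelStruct.Cofibrant x → ∀ {Q : C} (q : Q ⟶ 𝟙_ C),
    toModelStruct.Cofibrant Q → weq q → weq ((x ◁ q) ≫ (ρ_ x).hom)

/-- A weak monoidal Quillen adjunction: a Quillen adjunction together with a lax monoidal
structure on the right adjoint, such that the corresponding (doctrinal) oplax monoidal
structure on the left adjoint has a comultiplication which is a weak equivalence on
cofibrant objects, and such that `F` applied to a cofibrant replacement of the unit,
composed with the oplax counit, is a weak equivalence. -/
structure WeakMonoidalQuillenAdjunction {W V : Type*} [Category W] [Category V]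
    [MonoidalCategory W] [MonoidalCategory V]
    [HasPushouts W] [HasPushouts V] [HasInitial W] [HasInitial V]
    (MW : MonoidalModelStruct W) (MV : MonoidalModelStruct V)
    (F : W ⥤ V) (G : V ⥤ W) [F.OplaxMonoidal] [G.LaxMonoidal] extends
      QuillenAdjunction MW.toModelStruct MV.toModelStruct F G where
  compat_counit : adj.homEquiv (𝟙_ W) (𝟙_ V) (OplaxMonoidal.η F) = LaxMonoidal.ε G
  compat_comul : ∀ x y : W, adj.homEquiv (x ⊗ y) (F.obj x ⊗ F.obj y)
      (OplaxMonoidal.δ F x y) =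
    (adj.unit.app x ⊗ₘ adj.unit.app y) ≫ LaxMonoidal.μ G (F.obj x) (F.obj y)
  comul_weq : ∀ x y : W, MW.toModelStruct.Cofibrant x → MW.toModelStruct.Cofibrant y →
    MV.weq (OplaxMonoidal.δ F x y)
  counit_weq : ∀ {Q : W} (q : Q ⟶ 𝟙_ W), MW.toModelStruct.Cofibrant Q → MW.weq q →
    MV.weq (F.map q ≫ OplaxMonoidal.η F)


section Aux

open MonoidalClosed

/-- The canonical map `M ⟶ [𝟙, M]` is an isomorphism. -/
lemma curry_leftUnitor_isIso {V : Type*} [Category V] [MonoidalCategory V]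
    [MonoidalClosed V] (M : V) : IsIso (MonoidalClosed.curry (λ_ M).hom) := by
  refine ⟨(λ_ ((ihom (𝟙_ V)).obj M)).inv ≫ (ihom.ev (𝟙_ V)).app M, ?_, ?_⟩
  · rw [← Category.assoc, leftUnitor_inv_naturality, Category.assoc, ← uncurry_eq,
      uncurry_curry, Iso.inv_hom_id]
  · rw [Category.assoc, ← curry_natural_left, leftUnitor_naturality]
    have h : (λ_ (𝟙_ V ⊗ (ihom (𝟙_ V)).obj M)).hom =
        𝟙_ V ◁ (λ_ ((ihom (𝟙_ V)).obj M)).hom := by simp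
    rw [h, curry_natural_left]
    simp [← uncurry_id_eq_ev]

/-- Isomorphisms are weak equivalences in any model structure. -/
lemma ModelStruct.weq_of_isIso {C : Type*} [Category C] (M : ModelStruct C)
    {X Y : C} (f : X ⟶ Y) [IsIso f] : M.weq f := by
  refine M.weq_retract f (𝟙 Y) ⟨f, inv f, 𝟙 Y, 𝟙 Y, ?_, ?_, ?_, ?_⟩ (M.weq_id Y) <;> simp

end Aux

theorem external_unit_axiom_of_detection
    {V C : Type*} [Category V] [Category C]
    [MonoidalCategory V] [SymmetricCategory V] [MonoidalClosed V]
    [HasPushouts V] [HasInitial V] [HasTerminal V]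
    [EnrichedOrdinaryCategory V C] [HasInitial C] [HasTerminal C]
    (MV : MonoidalModelStruct V) (MC : ModelStruct C)
    (T : C ⥤ V ⥤ C)
    (φ : ∀ (v : V) (x y : C), ((T.obj x).obj v ⟶[V] y) ⟶ (ihom v).obj (x ⟶[V] y))
    -- naturality of `φ` in `v`
    (hφ_nat_v : ∀ {v v' : V} (f : v ⟶ v') (x y : C),
      φ v' x y ≫ (MonoidalClosed.pre f).app (x ⟶[V] y) =
        eHomWhiskerRight V ((T.obj x).map f) y ≫ φ v x y)
    -- naturality of `φ` in `x`
    (hφ_nat_x : ∀ (v : V) {x x' : C} (g : x ⟶ x') (y : C),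
      eHomWhiskerRight V ((T.map g).app v) y ≫ φ v x y =
        φ v x' y ≫ (ihom v).map (eHomWhiskerRight V g y))
    -- naturality of `φ` in `y`
    (hφ_nat_y : ∀ (v : V) (x : C) {y y' : C} (h : y ⟶ y'),
      φ v x y ≫ (ihom v).map (eHomWhiskerLeft V x h) =
        eHomWhiskerLeft V ((T.obj x).obj v) h ≫ φ v x y')
    -- `φ` is a weak equivalence for cofibrant `v`, cofibrant `x`, fibrant `y`
    (hφ_weq : ∀ (v : V) (x y : C), MV.toModelStruct.Cofibrant v → MC.Cofibrant x →
      MC.Fibrant y → MV.weq (φ v x y))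
    (ρ : T.flip.obj (𝟙_ V) ⟶ 𝟭 C)
    -- compatibility of `φ` and `ρ` with the canonical isomorphism
    (hρφ : ∀ (x y : C),
      eHomWhiskerRight V (ρ.app x) y ≫ φ (𝟙_ V) x y =
        MonoidalClosed.curry (λ_ (x ⟶[V] y)).hom)
    -- (i) the tensor of cofibrant objects is cofibrant
    (hTensorCof : ∀ (x : C) (v : V), MC.Cofibrant x → MV.toModelStruct.Cofibrant v →
      MC.Cofibrant ((T.obj x).obj v))
    -- (ii) hom-objects from cofibrant to fibrant objects are fibrant
    (hHomFib : ∀ (x y : C), MC.Cofibrant x → MC.Fibrant y →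
      MV.toModelStruct.Fibrant (x ⟶[V] y))
    -- (iii) restriction along a cofibrant replacement of the unit is a weak equivalence
    (hPre : ∀ (M : V), MV.toModelStruct.Fibrant M → ∀ {Q : V} (q : Q ⟶ 𝟙_ V),
      MV.toModelStruct.Cofibrant Q → MV.weq q → MV.weq ((MonoidalClosed.pre q).app M))
    -- (iv) the detection property over `V`
    (hdet : ∀ {a b : C} (f : a ⟶ b), MC.Cofibrant a → MC.Cofibrant b →
      (∀ (z : C), MC.Fibrant z → MV.weq (eHomWhiskerRight V f z)) → MC.weq f)
    -- the external unit axiom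
    (x : C) (hx : MC.Cofibrant x) {Q : V} (q : Q ⟶ 𝟙_ V)
    (hQ : MV.toModelStruct.Cofibrant Q) (hq : MV.weq q) :
    MC.weq ((T.obj x).map q ≫ ρ.app x) := by
  apply hdet _ (hTensorCof x Q hx hQ) hx
  intro z hz
  rw [eHomWhiskerRight_comp]
  have hφQ : MV.weq (φ Q x z) := hφ_weq Q x z hQ hx hz
  have hsq : φ (𝟙_ V) x z ≫ (MonoidalClosed.pre q).app (x ⟶[V] z) =
      eHomWhiskerRight V ((T.obj x).map q) z ≫ φ Q x z := hφ_nat_v q x z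
  have hcomp : MV.weq ((eHomWhiskerRight V (ρ.app x) z ≫
      eHomWhiskerRight V ((T.obj x).map q) z) ≫ φ Q x z) := by
    rw [Category.assoc, ← hsq, ← Category.assoc, hρφ]
    refine MV.weq_comp _ _ ?_ ?_
    · have := curry_leftUnitor_isIso (x ⟶[V] z)
      exact MV.toModelStruct.weq_of_isIso _
    · exact hPre _ (hHomFib x z hx hz) q hQ hq
  exact MV.weq_of_postcomp _ _ hφQ hcomp
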